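/- Let N(n₁,n₂,r,s) denote the number of pairs (u,v) ∈ Δ_{n₁,r} × Δ_{n₂,r} with D(u,v) = s, with the convention N(n₁,n₂,r,s) = 0 whenever any of the arguments is negative. Then for all integers n₁, n₂, s ≥ 0 and r ≥ 1: N(n₁,n₂,r,s) = Σ_{i≥0} N(n₁−i, n₂−i, r−1, s) + Σ_{i≥0} Σ_{j≥1} N(n₁−i, n₂−i−j, r−1, s−j) + Σ_{i≥0} Σ_{j≥1} N(n₁−i−j, n₂−i, r−1, s−j), where all sums are finite because all but finitely many terms vanish. -/

import Mathlib

/-- `simplexPairCount n₁ n₂ r s` is the number of pairs `(u,v) ∈ Δ_{n₁,r} × Δ_{n₂,r}`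
(standard simplices) with L1-distance `D(u,v) = s`.  If any of `n₁, n₂, s` is negative
the set is empty and the count is `0`. -/
noncomputable def simplexPairCount (n₁ n₂ : ℤ) (r : ℕ) (s : ℤ) : ℕ :=
  Nat.card {p : (Fin r → ℤ) × (Fin r → ℤ) //
    (∀ i, 0 ≤ p.1 i) ∧ (∑ i, p.1 i) = n₁ ∧
    (∀ i, 0 ≤ p.2 i) ∧ (∑ i, p.2 i) = n₂ ∧
    (∑ i, |p.1 i - p.2 i|) = s}

namespace SPCAux

def Good (n₁ n₂ s : ℤ) {r : ℕ} (p : (Fin r → ℤ) × (Fin r → ℤ)) : Prop :=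
  (∀ i, 0 ≤ p.1 i) ∧ (∑ i, p.1 i) = n₁ ∧
    (∀ i, 0 ≤ p.2 i) ∧ (∑ i, p.2 i) = n₂ ∧ (∑ i, |p.1 i - p.2 i|) = s

def Tt (n₁ n₂ s : ℤ) (r : ℕ) : Type :=
  {p : (Fin r → ℤ) × (Fin r → ℤ) // Good n₁ n₂ s p}

lemma spc_def (n₁ n₂ : ℤ) (r : ℕ) (s : ℤ) :
    simplexPairCount n₁ n₂ r s = Nat.card (Tt n₁ n₂ s r) := rfl

lemma tt_isEmpty {n₁ n₂ s : ℤ} {r : ℕ} (h : n₁ < 0 ∨ n₂ < 0 ∨ s < 0) :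
    IsEmpty (Tt n₁ n₂ s r) := by
  constructor
  rintro ⟨⟨u, v⟩, hu, hsu, hv, hsv, hd⟩
  have h1 : (0:ℤ) ≤ ∑ i, u i := Finset.sum_nonneg fun i _ => hu i
  have h2 : (0:ℤ) ≤ ∑ i, v i := Finset.sum_nonneg fun i _ => hv i
  have h3 : (0:ℤ) ≤ ∑ i, |u i - v i| := Finset.sum_nonneg fun i _ => abs_nonneg _
  rw [hsu] at h1; rw [hsv] at h2; rw [hd] at h3
  rcases h with h | h | h <;> omega

lemma spc_eq_zero {n₁ n₂ s : ℤ} {r : ℕ} (h : n₁ < 0 ∨ n₂ < 0 ∨ s < 0) :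
    simplexPairCount n₁ n₂ r s = 0 := by
  rw [spc_def]
  haveI := tt_isEmpty (r := r) h
  exact Nat.card_of_isEmpty

lemma nat_card_sigma {ι : Type*} {F : ι → Type*} [∀ i, Finite (F i)] (K : Finset ι)
    (hK : ∀ i ∉ K, IsEmpty (F i)) :
    Nat.card (Σ i, F i) = ∑ i ∈ K, Nat.card (F i) := by
  have e : (Σ i, F i) ≃ Σ i : K, F i :=
    { toFun := fun x => ⟨⟨x.1, by by_contra h; exact (hK _ h).false x.2⟩, x.2⟩
      invFun := fun x => ⟨x.1, x.2⟩
      left_inv := fun x => rfl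
      right_inv := fun x => rfl }
  haveI : ∀ i : K, Fintype (F i) := fun i => Fintype.ofFinite _
  rw [Nat.card_congr e, Nat.card_eq_fintype_card, Fintype.card_sigma,
    ← Finset.sum_coe_sort K (fun i => Nat.card (F i))]
  exact Finset.sum_congr rfl fun i _ => (Nat.card_eq_fintype_card).symm

/-- Splitting off the last coordinate. -/
def splitEquiv (n₁ n₂ s : ℤ) (m : ℕ) :
    Tt n₁ n₂ s (m + 1) ≃
      Σ ab : ℕ × ℕ, Tt (n₁ - ab.1) (n₂ - ab.2) (s - |(ab.1 : ℤ) - (ab.2 : ℤ)|) m where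
  toFun p :=
    ⟨((p.1.1 (Fin.last m)).toNat, (p.1.2 (Fin.last m)).toNat),
     ⟨(fun i => p.1.1 i.castSucc, fun i => p.1.2 i.castSucc), by
        obtain ⟨⟨u, v⟩, hu, hsu, hv, hsv, hd⟩ := p
        have hU : ((u (Fin.last m)).toNat : ℤ) = u (Fin.last m) := Int.toNat_of_nonneg (hu _)
        have hV : ((v (Fin.last m)).toNat : ℤ) = v (Fin.last m) := Int.toNat_of_nonneg (hv _)
        dsimp only at hsu hsv hd ⊢
        rw [Fin.sum_univ_castSucc] at hsu hsv hd
        refine ⟨fun i => hu _, ?_, fun i => hv _, ?_, ?_⟩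
        · simp only [hU]; omega
        · simp only [hV]; omega
        · simp only [hU, hV]; omega⟩⟩
  invFun x :=
    ⟨(Fin.snoc x.2.1.1 (x.1.1 : ℤ), Fin.snoc x.2.1.2 (x.1.2 : ℤ)), by
      obtain ⟨⟨a, b⟩, ⟨⟨u, v⟩, hu, hsu, hv, hsv, hd⟩⟩ := x
      refine ⟨?_, ?_, ?_, ?_, ?_⟩
      · intro i
        refine Fin.lastCases ?_ (fun i => ?_) i
        · simp only [Fin.snoc_last]; positivity
        · simpa only [Fin.snoc_castSucc] using hu i
      · rw [Fin.sum_univ_castSucc]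
        simp only [Fin.snoc_castSucc, Fin.snoc_last, hsu]; ring
      · intro i
        refine Fin.lastCases ?_ (fun i => ?_) i
        · simp only [Fin.snoc_last]; positivity
        · simpa only [Fin.snoc_castSucc] using hv i
      · rw [Fin.sum_univ_castSucc]
        simp only [Fin.snoc_castSucc, Fin.snoc_last, hsv]; ring
      · rw [Fin.sum_univ_castSucc]
        simp only [Fin.snoc_castSucc, Fin.snoc_last, hd]; ring⟩
  left_inv := by
    rintro ⟨⟨u, v⟩, hu, hsu, hv, hsv, hd⟩
    apply Subtype.ext
    refine Prod.ext ?_ ?_ <;> dsimp only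
    · rw [Int.toNat_of_nonneg (hu _)]; exact Fin.snoc_init_self u
    · rw [Int.toNat_of_nonneg (hv _)]; exact Fin.snoc_init_self v
  right_inv := by
    rintro ⟨⟨a, b⟩, ⟨⟨u, v⟩, hq⟩⟩
    dsimp only
    have ha : ((Fin.snoc u (a : ℤ) : Fin (m+1) → ℤ) (Fin.last m)).toNat = a := by
      simp [Fin.snoc_last]
    have hb : ((Fin.snoc v (b : ℤ) : Fin (m+1) → ℤ) (Fin.last m)).toNat = b := by
      simp [Fin.snoc_last]
    refine Sigma.ext ?_ ?_
    · simp only [ha, hb]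
    · refine (Subtype.heq_iff_coe_eq (α := (Fin m → ℤ) × (Fin m → ℤ)) ?_).2 ?_
      rotate_left
      · refine Prod.ext ?_ ?_ <;> funext i <;> simp [Fin.snoc_castSucc]
      · intro x; simp only [ha, hb]


instance tt_finite (n₁ n₂ s : ℤ) (r : ℕ) : Finite (Tt n₁ n₂ s r) := by
  haveI : Finite (Set.Icc (0:ℤ) n₁) := (Set.finite_Icc 0 n₁).to_subtype
  haveI : Finite (Set.Icc (0:ℤ) n₂) := (Set.finite_Icc 0 n₂).to_subtype
  apply Finite.of_injective (β := (Fin r → Set.Icc (0:ℤ) n₁) × (Fin r → Set.Icc (0:ℤ) n₂))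
    (f := fun p => (fun i => ⟨p.1.1 i, p.2.1 i, by
        have := Finset.single_le_sum (f := p.1.1) (fun j _ => p.2.1 j) (Finset.mem_univ i)
        rw [p.2.2.1] at this; exact this⟩,
      fun i => ⟨p.1.2 i, p.2.2.2.1 i, by
        have := Finset.single_le_sum (f := p.1.2) (fun j _ => p.2.2.2.1 j) (Finset.mem_univ i)
        rw [p.2.2.2.2.1] at this; exact this⟩))
  intro p q h
  apply Subtype.ext
  refine Prod.ext ?_ ?_ <;> funext i
  · exact congrArg Subtype.val (congrFun (congrArg Prod.fst h) i)
  · exact congrArg Subtype.val (congrFun (congrArg Prod.snd h) i)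

lemma key (n₁ n₂ s : ℤ) (hn₁ : 0 ≤ n₁) (hn₂ : 0 ≤ n₂) (m : ℕ) :
    simplexPairCount n₁ n₂ (m + 1) s
      = ∑ ab ∈ Finset.range (n₁.toNat + 1) ×ˢ Finset.range (n₂.toNat + 1),
          simplexPairCount (n₁ - ab.1) (n₂ - ab.2) m (s - |(ab.1 : ℤ) - (ab.2 : ℤ)|) := by
  rw [spc_def, Nat.card_congr (splitEquiv n₁ n₂ s m),
    nat_card_sigma (F := fun ab : ℕ × ℕ =>
      Tt (n₁ - ab.1) (n₂ - ab.2) (s - |(ab.1:ℤ) - (ab.2:ℤ)|) m)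
      (Finset.range (n₁.toNat + 1) ×ˢ Finset.range (n₂.toNat + 1)) ?_]
  · rfl
  · intro ab hab
    apply tt_isEmpty
    simp only [Finset.mem_product, Finset.mem_range, not_and_or, not_lt] at hab
    rcases hab with h | h
    · left; omega
    · right; left; omega

lemma tsum_trichotomy (g : ℕ × ℕ → ℕ) (A B : ℕ)
    (hg : ∀ ab : ℕ × ℕ, A < ab.1 ∨ B < ab.2 → g ab = 0) :
    ∑' ab : ℕ × ℕ, g ab
      = (∑' i : ℕ, g (i, i)) + (∑' i : ℕ, ∑' j : ℕ, g (i, i + j + 1))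
        + (∑' i : ℕ, ∑' j : ℕ, g (i + j + 1, i)) := by
  classical
  have hgfin : (Function.support g).Finite := by
    apply (Finset.range (A+1) ×ˢ Finset.range (B+1)).finite_toSet.subset
    intro ab hab
    simp only [Function.mem_support] at hab
    simp only [Finset.coe_product, Set.mem_prod, Finset.mem_coe, Finset.mem_range]
    constructor <;> by_contra h <;> exact hab (hg ab (by omega))
  set g₁ : ℕ × ℕ → ℕ := fun ab => if ab.1 = ab.2 then g ab else 0 with hg₁
  set g₂ : ℕ × ℕ → ℕ := fun ab => if ab.1 < ab.2 then g ab else 0 with hg₂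
  set g₃ : ℕ × ℕ → ℕ := fun ab => if ab.2 < ab.1 then g ab else 0 with hg₃
  have h1sub : Function.support g₁ ⊆ Function.support g := fun ab hab => by
    simp only [Function.mem_support, hg₁] at hab ⊢
    intro h0; apply hab; split <;> simp [h0]
  have h2sub : Function.support g₂ ⊆ Function.support g := fun ab hab => by
    simp only [Function.mem_support, hg₂] at hab ⊢
    intro h0; apply hab; split <;> simp [h0]
  have h3sub : Function.support g₃ ⊆ Function.support g := fun ab hab => by
    simp only [Function.mem_support, hg₃] at hab ⊢
    intro h0; apply hab; split <;> simp [h0]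
  have hs₁ : Summable g₁ := summable_of_finite_support (hgfin.subset h1sub)
  have hs₂ : Summable g₂ := summable_of_finite_support (hgfin.subset h2sub)
  have hs₃ : Summable g₃ := summable_of_finite_support (hgfin.subset h3sub)
  have hdec : ∀ ab, g ab = g₁ ab + g₂ ab + g₃ ab := by
    rintro ⟨a, b⟩
    simp only [hg₁, hg₂, hg₃]
    rcases lt_trichotomy a b with h | h | h
    · rw [if_neg (by omega), if_pos h, if_neg (by omega)]; omega
    · rw [if_pos h, if_neg (by omega), if_neg (by omega)]; omega
    · rw [if_neg (by omega), if_neg (by omega), if_pos h]; omega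
  have e₁ : ∑' ab : ℕ × ℕ, g₁ ab = ∑' i : ℕ, g (i, i) := by
    have hinj : Function.Injective (fun i : ℕ => ((i, i) : ℕ × ℕ)) := by
      intro a b h
      simpa using congrArg Prod.fst h
    rw [← hinj.tsum_eq ?_]
    · exact tsum_congr fun i => by simp [hg₁]
    · intro ab hab
      simp only [Function.mem_support, hg₁] at hab
      have : ab.1 = ab.2 := by by_contra h; simp [h] at hab
      exact ⟨ab.1, Prod.ext rfl this⟩
  have e₂ : ∑' ab : ℕ × ℕ, g₂ ab = ∑' i : ℕ, ∑' j : ℕ, g (i, i + j + 1) := by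
    have hinj : Function.Injective (fun p : ℕ × ℕ => ((p.1, p.1 + p.2 + 1) : ℕ × ℕ)) := by
      rintro ⟨a, b⟩ ⟨c, d⟩ h
      simp only [Prod.mk.injEq] at h ⊢
      omega
    rw [← hinj.tsum_eq ?_]
    · have hptwise : ∀ p : ℕ × ℕ, g₂ (p.1, p.1 + p.2 + 1) = g (p.1, p.1 + p.2 + 1) := by
        intro p; simp only [hg₂]; rw [if_pos (by omega)]
      have hsum : Summable (fun p : ℕ × ℕ => g (p.1, p.1 + p.2 + 1)) := by
        apply summable_of_finite_support
        apply ((Finset.range (A+1) ×ˢ Finset.range (B+1)).finite_toSet.subset)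
        intro p hp
        simp only [Function.mem_support] at hp
        simp only [Finset.coe_product, Set.mem_prod, Finset.mem_coe, Finset.mem_range]
        constructor <;> by_contra h <;> exact hp (hg _ (by simp; omega))
      calc ∑' p : ℕ × ℕ, g₂ (p.1, p.1 + p.2 + 1)
          = ∑' p : ℕ × ℕ, g (p.1, p.1 + p.2 + 1) := tsum_congr hptwise
        _ = ∑' i : ℕ, ∑' j : ℕ, g (i, i + j + 1) := by
            refine Summable.tsum_prod' hsum (fun i => ?_)
            apply summable_of_finite_support
            apply (Finset.range (B+1)).finite_toSet.subset
            intro j hj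
            simp only [Function.mem_support] at hj
            simp only [Finset.mem_coe, Finset.mem_range]
            by_contra h
            exact hj (hg _ (by simp; omega))
    · intro ab hab
      simp only [Function.mem_support, hg₂] at hab
      have hlt : ab.1 < ab.2 := by by_contra h; simp [h] at hab
      exact ⟨(ab.1, ab.2 - ab.1 - 1), Prod.ext rfl (by simp; omega)⟩
  have e₃ : ∑' ab : ℕ × ℕ, g₃ ab = ∑' i : ℕ, ∑' j : ℕ, g (i + j + 1, i) := by
    have hinj : Function.Injective (fun p : ℕ × ℕ => ((p.1 + p.2 + 1, p.1) : ℕ × ℕ)) := by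
      rintro ⟨a, b⟩ ⟨c, d⟩ h
      simp only [Prod.mk.injEq] at h ⊢
      omega
    rw [← hinj.tsum_eq ?_]
    · have hptwise : ∀ p : ℕ × ℕ, g₃ (p.1 + p.2 + 1, p.1) = g (p.1 + p.2 + 1, p.1) := by
        intro p; simp only [hg₃]; rw [if_pos (by omega)]
      have hsum : Summable (fun p : ℕ × ℕ => g (p.1 + p.2 + 1, p.1)) := by
        apply summable_of_finite_support
        apply ((Finset.range (B+1) ×ˢ Finset.range (A+1)).finite_toSet.subset)
        intro p hp
        simp only [Function.mem_support] at hp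
        simp only [Finset.coe_product, Set.mem_prod, Finset.mem_coe, Finset.mem_range]
        constructor <;> by_contra h <;> exact hp (hg _ (by simp; omega))
      calc ∑' p : ℕ × ℕ, g₃ (p.1 + p.2 + 1, p.1)
          = ∑' p : ℕ × ℕ, g (p.1 + p.2 + 1, p.1) := tsum_congr hptwise
        _ = ∑' i : ℕ, ∑' j : ℕ, g (i + j + 1, i) := by
            refine Summable.tsum_prod' hsum (fun i => ?_)
            apply summable_of_finite_support
            apply (Finset.range (A+1)).finite_toSet.subset
            intro j hj
            simp only [Function.mem_support] at hj
            simp only [Finset.mem_coe, Finset.mem_range]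
            by_contra h
            exact hj (hg _ (by simp; omega))
    · intro ab hab
      simp only [Function.mem_support, hg₃] at hab
      have hlt : ab.2 < ab.1 := by by_contra h; simp [h] at hab
      refine ⟨(ab.2, ab.1 - ab.2 - 1), Prod.ext (by simp; omega) rfl⟩
  calc ∑' ab : ℕ × ℕ, g ab
      = ∑' ab : ℕ × ℕ, (g₁ ab + g₂ ab + g₃ ab) := tsum_congr hdec
    _ = (∑' ab : ℕ × ℕ, (g₁ ab + g₂ ab)) + ∑' ab : ℕ × ℕ, g₃ ab := Summable.tsum_add (hs₁.add hs₂) hs₃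
    _ = (∑' ab : ℕ × ℕ, g₁ ab) + (∑' ab : ℕ × ℕ, g₂ ab) + ∑' ab : ℕ × ℕ, g₃ ab := by
        rw [Summable.tsum_add hs₁ hs₂]
    _ = _ := by rw [e₁, e₂, e₃]

end SPCAux

/-- Recursive characterization of the number of pairs at L1-distance `s` in standard
simplices.  The sums `Σ_{i ≥ 0}` and `Σ_{j ≥ 1}` are written as `tsum`s over `ℕ`
(`j ≥ 1` being encoded by summing over `j + 1`); all but finitely many terms vanish. -/
theorem stmt2 (n₁ n₂ s : ℤ) (hn₁ : 0 ≤ n₁) (hn₂ : 0 ≤ n₂) (hs : 0 ≤ s)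
    (r : ℕ) (hr : 1 ≤ r) :
    simplexPairCount n₁ n₂ r s
      = (∑' i : ℕ, simplexPairCount (n₁ - (i : ℤ)) (n₂ - (i : ℤ)) (r - 1) s)
      + (∑' i : ℕ, ∑' j : ℕ,
          simplexPairCount (n₁ - (i : ℤ)) (n₂ - (i : ℤ) - ((j : ℤ) + 1)) (r - 1)
            (s - ((j : ℤ) + 1)))
      + (∑' i : ℕ, ∑' j : ℕ,
          simplexPairCount (n₁ - (i : ℤ) - ((j : ℤ) + 1)) (n₂ - (i : ℤ)) (r - 1)
            (s - ((j : ℤ) + 1))) := by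
  obtain ⟨m, rfl⟩ : ∃ m, r = m + 1 := ⟨r - 1, by omega⟩
  simp only [Nat.add_sub_cancel]
  set G : ℕ × ℕ → ℕ := fun ab =>
    simplexPairCount (n₁ - ab.1) (n₂ - ab.2) m (s - |(ab.1 : ℤ) - (ab.2 : ℤ)|) with hGdef
  have hzero : ∀ ab : ℕ × ℕ, n₁.toNat < ab.1 ∨ n₂.toNat < ab.2 → G ab = 0 := by
    intro ab h
    apply SPCAux.spc_eq_zero
    rcases h with h | h
    · left; omega
    · right; left; omega
  have hls : simplexPairCount n₁ n₂ (m + 1) s = ∑' ab : ℕ × ℕ, G ab := by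
    rw [SPCAux.key n₁ n₂ s hn₁ hn₂ m]
    refine (tsum_eq_sum (fun ab hab => hzero ab ?_)).symm
    simp only [Finset.mem_product, Finset.mem_range, not_and_or, not_lt] at hab
    omega
  rw [hls, SPCAux.tsum_trichotomy G n₁.toNat n₂.toNat hzero]
  congr 1
  · congr 1
    · exact tsum_congr fun i => by simp [hGdef]
    · refine tsum_congr fun i => tsum_congr fun j => ?_
      have h1 : n₂ - ((i + j + 1 : ℕ) : ℤ) = n₂ - (i : ℤ) - ((j : ℤ) + 1) := by
        push_cast; ring
      have h2 : s - |(i : ℤ) - ((i + j + 1 : ℕ) : ℤ)| = s - ((j : ℤ) + 1) := by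
        rw [show ((i + j + 1 : ℕ) : ℤ) = (i : ℤ) + (j : ℤ) + 1 by push_cast; ring,
          show (i : ℤ) - ((i : ℤ) + (j : ℤ) + 1) = -((j : ℤ) + 1) by ring, abs_neg,
          abs_of_nonneg (by positivity)]
      simp only [hGdef]
      rw [h1, h2]
  · refine tsum_congr fun i => tsum_congr fun j => ?_
    have h1 : n₁ - ((i + j + 1 : ℕ) : ℤ) = n₁ - (i : ℤ) - ((j : ℤ) + 1) := by
      push_cast; ring
    have h2 : s - |((i + j + 1 : ℕ) : ℤ) - (i : ℤ)| = s - ((j : ℤ) + 1) := by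
      rw [show ((i + j + 1 : ℕ) : ℤ) = (i : ℤ) + (j : ℤ) + 1 by push_cast; ring,
        show (i : ℤ) + (j : ℤ) + 1 - (i : ℤ) = (j : ℤ) + 1 by ring,
        abs_of_nonneg (by positivity)]
    simp only [hGdef]
    rw [h1, h2]
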